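/- Let G=(V,E) be a finite simple undirected graph, let 0 < p_e < 1 for all e ∈ E and 0 < λ_v ≤ 1 for all v ∈ V, and let wt_wrc denote the weight function of the weighted random cluster model with edge parameters p and vertex weights λ. Then the Metropolis acceptance probabilities of the edge-flipping dynamics are monotone: for all X ⊆ Y ⊆ E and every edge e ∈ E, min{1, wt_wrc(X∪{e})/wt_wrc(X)} ≤ min{1, wt_wrc(Y∪{e})/wt_wrc(Y)} and min{1, wt_wrc(Y\{e})/wt_wrc(Y)} ≤ min{1, wt_wrc(X\{e})/wt_wrc(X)}. (Consequently, the grand coupling φ of the edge-flipping dynamics for the weighted random cluster model is monotone with respect to the subset partial order: X ⊆ Y implies φ(X,U) ⊆ φ(Y,U) for every realization U of the update randomness.) -/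
import Mathlib


open Finset
open scoped Classical

noncomputable section

variable {V : Type*} [Fintype V] [DecidableEq V]

/-- The vertex set of the connected component of `v` in the graph `(V, S)`. -/
def compOf (S : Finset (Sym2 V)) (v : V) : Finset V :=
  Finset.univ.filter fun u => (SimpleGraph.fromEdgeSet (↑S : Set (Sym2 V))).Reachable v u

/-- `κ(V,S)`: the set of vertex sets of connected components of the graph `(V, S)`. -/
def kappa (S : Finset (Sym2 V)) : Finset (Finset V) :=
  Finset.univ.image (compOf S)

/-- `∏_{C ∈ κ(V,S)} (1 + ∏_{u ∈ C} λ_u)`. -/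
def clusterProd (S : Finset (Sym2 V)) (lam : V → ℝ) : ℝ :=
  ∏ C ∈ kappa S, (1 + ∏ u ∈ C, lam u)

/-- Weight of an edge subset `S ⊆ E₀` in the weighted random cluster model. -/
def wtWRC (E₀ : Finset (Sym2 V)) (q : Sym2 V → ℝ) (lam : V → ℝ) (S : Finset (Sym2 V)) : ℝ :=
  (∏ e ∈ S, q e) * (∏ f ∈ E₀ \ S, (1 - q f)) * clusterProd S lam

/-- Partition function of the weighted random cluster model. -/
def ZWRC (E₀ : Finset (Sym2 V)) (q : Sym2 V → ℝ) (lam : V → ℝ) : ℝ :=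
  ∑ S ∈ E₀.powerset, wtWRC E₀ q lam S

/-- The weighted random cluster distribution. -/
def piWRC (E₀ : Finset (Sym2 V)) (q : Sym2 V → ℝ) (lam : V → ℝ) (S : Finset (Sym2 V)) : ℝ :=
  wtWRC E₀ q lam S / ZWRC E₀ q lam

/-- The monochromatic edges of a spin configuration `σ`. -/
def monoEdges (E₀ : Finset (Sym2 V)) (σ : V → Bool) : Finset (Sym2 V) :=
  E₀.filter fun e => (e.map σ).IsDiag

/-- Weight of a spin configuration in the Ising model. -/
def wtIsing (E₀ : Finset (Sym2 V)) (β : Sym2 V → ℝ) (lam : V → ℝ) (σ : V → Bool) : ℝ :=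
  (∏ e ∈ monoEdges E₀ σ, β e) * ∏ v : V, (if σ v then lam v else 1)

/-- Ising partition function. -/
def ZIsing (E₀ : Finset (Sym2 V)) (β : Sym2 V → ℝ) (lam : V → ℝ) : ℝ :=
  ∑ σ : V → Bool, wtIsing E₀ β lam σ

/-- Ising Gibbs distribution. -/
def piIsing (E₀ : Finset (Sym2 V)) (β : Sym2 V → ℝ) (lam : V → ℝ) (σ : V → Bool) : ℝ :=
  wtIsing E₀ β lam σ / ZIsing E₀ β lam

/-- Vertices of odd degree in the graph `(V, S)`. -/
def oddVerts (S : Finset (Sym2 V)) : Finset V :=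
  Finset.univ.filter fun v => Odd (S.filter fun e => v ∈ e).card

/-- Weight of an edge subset in the subgraph-world model. -/
def wtSG (E₀ : Finset (Sym2 V)) (p : Sym2 V → ℝ) (η : V → ℝ) (S : Finset (Sym2 V)) : ℝ :=
  (∏ e ∈ S, p e) * (∏ f ∈ E₀ \ S, (1 - p f)) * ∏ v ∈ oddVerts S, η v

/-- Subgraph-world partition function. -/
def ZSG (E₀ : Finset (Sym2 V)) (p : Sym2 V → ℝ) (η : V → ℝ) : ℝ :=
  ∑ S ∈ E₀.powerset, wtSG E₀ p η S

/-- Subgraph-world distribution. -/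
def piSG (E₀ : Finset (Sym2 V)) (p : Sym2 V → ℝ) (η : V → ℝ) (S : Finset (Sym2 V)) : ℝ :=
  wtSG E₀ p η S / ZSG E₀ p η

/-- The transformation `P_{I→R}` from Ising configurations to edge subsets. -/
def PIR (E₀ : Finset (Sym2 V)) (β : Sym2 V → ℝ) (σ : V → Bool) (S : Finset (Sym2 V)) : ℝ :=
  if S ⊆ monoEdges E₀ σ then
    (∏ e ∈ S, (1 - (β e)⁻¹)) * ∏ f ∈ monoEdges E₀ σ \ S, (β f)⁻¹
  else 0

/-- The transformation `P_{R→I}` from edge subsets to Ising configurations. -/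
def PRI (E₀ : Finset (Sym2 V)) (lam : V → ℝ) (S : Finset (Sym2 V)) (σ : V → Bool) : ℝ :=
  if S ⊆ monoEdges E₀ σ then
    ∏ C ∈ kappa S, ((∏ v ∈ C, if σ v then lam v else 1) / (1 + ∏ v ∈ C, lam v))
  else 0

/-- Swendsen-Wang dynamics for the Ising model: `P_{I→R} ⬝ P_{R→I}`. -/
def PSWIsing (E₀ : Finset (Sym2 V)) (β : Sym2 V → ℝ) (lam : V → ℝ) (σ τ : V → Bool) : ℝ :=
  ∑ S ∈ E₀.powerset, PIR E₀ β σ S * PRI E₀ lam S τ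

/-- Swendsen-Wang dynamics for the weighted random cluster model: `P_{R→I} ⬝ P_{I→R}`. -/
def PSWwrc (E₀ : Finset (Sym2 V)) (β : Sym2 V → ℝ) (lam : V → ℝ)
    (S S' : Finset (Sym2 V)) : ℝ :=
  ∑ σ : V → Bool, PRI E₀ lam S σ * PIR E₀ β σ S'

/-- Lazy edge-flipping (Metropolis) dynamics for a distribution `pi` on subsets of `E₀`. -/
def PEF (E₀ : Finset (Sym2 V)) (pi : Finset (Sym2 V) → ℝ) (x y : Finset (Sym2 V)) : ℝ :=
  if x = y then
    1 - (1 / (2 * (E₀.card : ℝ))) * ∑ e ∈ E₀, min 1 (pi (symmDiff x {e}) / pi x)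
  else if (symmDiff x y).card = 1 then
    (1 / (2 * (E₀.card : ℝ))) * min 1 (pi y / pi x)
  else 0

/-- Variance of `f` with respect to a distribution `pi` supported on `states`. -/
def varOn {α : Type*} (states : Finset α) (pi f : α → ℝ) : ℝ :=
  (∑ x ∈ states, pi x * f x ^ 2) - (∑ x ∈ states, pi x * f x) ^ 2

/-- Dirichlet form of a Markov kernel `P` with stationary distribution `pi` on `states`. -/
def dirichletOn {α : Type*} (states : Finset α) (pi : α → ℝ) (P : α → α → ℝ) (f : α → ℝ) : ℝ :=
  ∑ x ∈ states, pi x * f x * (f x - ∑ y ∈ states, P x y * f y)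

/-- Spectral gap of a reversible Markov kernel `P` with stationary distribution `pi`. -/
def gapOn {α : Type*} (states : Finset α) (pi : α → ℝ) (P : α → α → ℝ) : ℝ :=
  sInf ((fun f : α → ℝ => dirichletOn states pi P f / varOn states pi f) ''
    {f | varOn states pi f ≠ 0})

/-- Total variation distance between two distributions on `states`. -/
def dTV {α : Type*} (states : Finset α) (μ ν : α → ℝ) : ℝ :=
  (1 / 2) * ∑ z ∈ states, |μ z - ν z|

/-- `t`-step transition probabilities of the Markov kernel `P` on state space `states`. -/
def kpow {α : Type*} (states : Finset α) (P : α → α → ℝ) : ℕ → α → α → ℝ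
  | 0 => fun x y => if x = y then 1 else 0
  | (t + 1) => fun x y => ∑ z ∈ states, P x z * kpow states P t z y


section Aux
set_option linter.unusedSectionVars false

lemma mem_compOf {S : Finset (Sym2 V)} {v u : V} :
    u ∈ compOf S v ↔ (SimpleGraph.fromEdgeSet (↑S : Set (Sym2 V))).Reachable v u := by
  simp [compOf]

lemma self_mem_compOf (S : Finset (Sym2 V)) (v : V) : v ∈ compOf S v :=
  mem_compOf.2 (SimpleGraph.Reachable.refl v)

lemma compOf_eq_of_reachable {S : Finset (Sym2 V)} {v w : V}
    (h : (SimpleGraph.fromEdgeSet (↑S : Set (Sym2 V))).Reachable v w) :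
    compOf S v = compOf S w := by
  ext u; simp only [mem_compOf]
  exact ⟨fun h' => h.symm.trans h', fun h' => h.trans h'⟩

lemma compOf_eq_iff {S : Finset (Sym2 V)} {v w : V} :
    compOf S v = compOf S w ↔ (SimpleGraph.fromEdgeSet (↑S : Set (Sym2 V))).Reachable v w := by
  constructor
  · intro h
    have := self_mem_compOf S w
    rw [← h, mem_compOf] at this
    exact this
  · exact compOf_eq_of_reachable

lemma compOf_subset {X Y : Finset (Sym2 V)} (h : X ⊆ Y) (v : V) :
    compOf X v ⊆ compOf Y v := by
  intro u hu
  rw [mem_compOf] at hu ⊢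
  exact hu.mono (SimpleGraph.fromEdgeSet_mono (by exact_mod_cast h))

lemma reachable_insert_iff {S : Finset (Sym2 V)} {u v : V} (huv : u ≠ v) (x y : V) :
    (SimpleGraph.fromEdgeSet (↑(insert s(u, v) S) : Set (Sym2 V))).Reachable x y ↔
      (SimpleGraph.fromEdgeSet (↑S : Set (Sym2 V))).Reachable x y ∨
      ((SimpleGraph.fromEdgeSet (↑S : Set (Sym2 V))).Reachable x u ∧
       (SimpleGraph.fromEdgeSet (↑S : Set (Sym2 V))).Reachable v y) ∨
      ((SimpleGraph.fromEdgeSet (↑S : Set (Sym2 V))).Reachable x v ∧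
       (SimpleGraph.fromEdgeSet (↑S : Set (Sym2 V))).Reachable u y) := by
  set G := SimpleGraph.fromEdgeSet (↑S : Set (Sym2 V)) with hG
  constructor
  · intro h
    rw [SimpleGraph.reachable_iff_reflTransGen] at h
    induction h with
    | refl => exact Or.inl (SimpleGraph.Reachable.refl x)
    | tail _ hbc ih =>
      rename_i b c _
      rw [SimpleGraph.fromEdgeSet_adj, Finset.coe_insert, Set.mem_insert_iff] at hbc
      obtain ⟨hbc | hbc, hne⟩ := hbc
      · rw [Sym2.eq_iff] at hbc
        have hRb : G.Reachable x b ∨ (G.Reachable x u ∧ G.Reachable v b) ∨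
            (G.Reachable x v ∧ G.Reachable u b) := ih
        rcases hbc with ⟨hb, hc⟩ | ⟨hb, hc⟩
        · rw [hb] at hRb; rw [hc]
          rcases hRb with h1 | ⟨h1, h2⟩ | ⟨h1, h2⟩
          · exact Or.inr (Or.inl ⟨h1, SimpleGraph.Reachable.refl v⟩)
          · exact Or.inr (Or.inl ⟨h1, SimpleGraph.Reachable.refl v⟩)
          · exact Or.inl h1
        · rw [hb] at hRb; rw [hc]
          rcases hRb with h1 | ⟨h1, h2⟩ | ⟨h1, h2⟩
          · exact Or.inr (Or.inr ⟨h1, SimpleGraph.Reachable.refl u⟩)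
          · exact Or.inl h1
          · exact Or.inr (Or.inr ⟨h1, SimpleGraph.Reachable.refl u⟩)
      · have hadj : G.Adj b c := (SimpleGraph.fromEdgeSet_adj _).2 ⟨hbc, hne⟩
        rcases ih with h1 | ⟨h1, h2⟩ | ⟨h1, h2⟩
        · exact Or.inl (h1.trans hadj.reachable)
        · exact Or.inr (Or.inl ⟨h1, h2.trans hadj.reachable⟩)
        · exact Or.inr (Or.inr ⟨h1, h2.trans hadj.reachable⟩)
  · have hmono : G ≤ SimpleGraph.fromEdgeSet (↑(insert s(u, v) S) : Set (Sym2 V)) := by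
      apply SimpleGraph.fromEdgeSet_mono
      exact_mod_cast Finset.subset_insert _ _
    have hedge : (SimpleGraph.fromEdgeSet (↑(insert s(u, v) S) : Set (Sym2 V))).Adj u v :=
      (SimpleGraph.fromEdgeSet_adj _).2 ⟨by simp, huv⟩
    rintro (h | ⟨h1, h2⟩ | ⟨h1, h2⟩)
    · exact h.mono hmono
    · exact ((h1.mono hmono).trans hedge.reachable).trans (h2.mono hmono)
    · exact ((h1.mono hmono).trans hedge.symm.reachable).trans (h2.mono hmono)

section Insert

variable {S : Finset (Sym2 V)} {u v : V}

lemma compOf_insert_of_reachable (huv : u ≠ v)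
    (h : (SimpleGraph.fromEdgeSet (↑S : Set (Sym2 V))).Reachable u v) (x : V) :
    compOf (insert s(u, v) S) x = compOf S x := by
  ext y
  simp only [mem_compOf, reachable_insert_iff huv]
  constructor
  · rintro (h1 | ⟨h1, h2⟩ | ⟨h1, h2⟩)
    · exact h1
    · exact (h1.trans h).trans h2
    · exact (h1.trans h.symm).trans h2
  · exact Or.inl

lemma clusterProd_insert_of_reachable (huv : u ≠ v)
    (h : (SimpleGraph.fromEdgeSet (↑S : Set (Sym2 V))).Reachable u v) (lam : V → ℝ) :
    clusterProd (insert s(u, v) S) lam = clusterProd S lam := by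
  unfold clusterProd kappa
  congr 1
  apply Finset.image_congr
  intro x _
  exact compOf_insert_of_reachable huv h x

variable (hnr : ¬ (SimpleGraph.fromEdgeSet (↑S : Set (Sym2 V))).Reachable u v)
  (huv : u ≠ v)

include hnr huv

lemma compOf_insert_left {x : V}
    (hx : (SimpleGraph.fromEdgeSet (↑S : Set (Sym2 V))).Reachable x u) :
    compOf (insert s(u, v) S) x = compOf S u ∪ compOf S v := by
  ext y
  simp only [mem_compOf, reachable_insert_iff huv, Finset.mem_union]
  constructor
  · rintro (h1 | ⟨h1, h2⟩ | ⟨h1, h2⟩)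
    · exact Or.inl (hx.symm.trans h1)
    · exact Or.inr h2
    · exact absurd (hx.symm.trans h1) hnr
  · rintro (h1 | h1)
    · exact Or.inl (hx.trans h1)
    · exact Or.inr (Or.inl ⟨hx, h1⟩)

lemma compOf_insert_none {x : V}
    (hxu : ¬ (SimpleGraph.fromEdgeSet (↑S : Set (Sym2 V))).Reachable x u)
    (hxv : ¬ (SimpleGraph.fromEdgeSet (↑S : Set (Sym2 V))).Reachable x v) :
    compOf (insert s(u, v) S) x = compOf S x := by
  ext y
  simp only [mem_compOf, reachable_insert_iff huv]
  constructor
  · rintro (h1 | ⟨h1, h2⟩ | ⟨h1, h2⟩)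
    · exact h1
    · exact absurd h1 hxu
    · exact absurd h1 hxv
  · exact Or.inl

lemma disjoint_compOf : Disjoint (compOf S u) (compOf S v) := by
  rw [Finset.disjoint_left]
  intro a ha hb
  rw [mem_compOf] at ha hb
  exact hnr (ha.trans hb.symm)

lemma union_notMem_kappa : compOf S u ∪ compOf S v ∉ kappa S := by
  intro hmem
  rw [kappa, Finset.mem_image] at hmem
  obtain ⟨x, -, hx⟩ := hmem
  have hu : u ∈ compOf S x := by
    rw [hx]; exact Finset.mem_union_left _ (self_mem_compOf S u)
  have hv : v ∈ compOf S x := by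
    rw [hx]; exact Finset.mem_union_right _ (self_mem_compOf S v)
  rw [mem_compOf] at hu hv
  exact hnr (hu.symm.trans hv)

lemma kappa_insert :
    kappa (insert s(u, v) S) =
      insert (compOf S u ∪ compOf S v) (kappa S \ {compOf S u, compOf S v}) := by
  ext C
  simp only [kappa, Finset.mem_insert, Finset.mem_image, Finset.mem_sdiff,
    Finset.mem_univ, true_and]
  constructor
  · rintro ⟨x, hx⟩
    by_cases hxu : (SimpleGraph.fromEdgeSet (↑S : Set (Sym2 V))).Reachable x u
    · left; rw [← hx, compOf_insert_left hnr huv hxu]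
    · by_cases hxv : (SimpleGraph.fromEdgeSet (↑S : Set (Sym2 V))).Reachable x v
      · left
        rw [← hx, Finset.union_comm]
        have := compOf_insert_left (S := S) (u := v) (v := u)
          (fun hc => hnr hc.symm) huv.symm hxv
        rw [Sym2.eq_swap] at this
        exact this
      · right
        refine ⟨⟨x, compOf_insert_none hnr huv hxu hxv ▸ hx⟩, ?_⟩
        rw [← hx, compOf_insert_none hnr huv hxu hxv]
        simp only [Finset.mem_insert, Finset.mem_singleton, compOf_eq_iff]
        push_neg
        exact ⟨hxu, hxv⟩
  · rintro (rfl | ⟨⟨x, hx⟩, hC⟩)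
    · exact ⟨u, compOf_insert_left hnr huv (SimpleGraph.Reachable.refl u)⟩
    · refine ⟨x, ?_⟩
      rw [← hx] at hC
      simp only [Finset.mem_insert, Finset.mem_singleton, compOf_eq_iff] at hC
      push_neg at hC
      rw [compOf_insert_none hnr huv hC.1 hC.2, hx]

lemma kappa_eq : kappa S =
    insert (compOf S u) (insert (compOf S v) (kappa S \ {compOf S u, compOf S v})) := by
  ext C
  simp only [Finset.mem_insert, Finset.mem_sdiff, Finset.mem_singleton]
  constructor
  · intro hC
    by_cases h1 : C = compOf S u
    · exact Or.inl h1
    by_cases h2 : C = compOf S v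
    · exact Or.inr (Or.inl h2)
    · exact Or.inr (Or.inr ⟨hC, by simp [h1, h2]⟩)
  · rintro (rfl | rfl | ⟨hC, -⟩)
    · exact Finset.mem_image_of_mem _ (Finset.mem_univ u)
    · exact Finset.mem_image_of_mem _ (Finset.mem_univ v)
    · exact hC

lemma clusterProd_insert (lam : V → ℝ) :
    clusterProd (insert s(u, v) S) lam =
      (1 + (∏ w ∈ compOf S u, lam w) * ∏ w ∈ compOf S v, lam w) *
        ∏ C ∈ kappa S \ {compOf S u, compOf S v}, (1 + ∏ w ∈ C, lam w) := by
  rw [clusterProd, kappa_insert hnr huv, Finset.prod_insert, Finset.prod_union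
    (disjoint_compOf hnr huv)]
  intro hmem
  exact union_notMem_kappa hnr huv (Finset.mem_sdiff.1 hmem).1

lemma clusterProd_split (lam : V → ℝ) :
    clusterProd S lam =
      (1 + ∏ w ∈ compOf S u, lam w) * ((1 + ∏ w ∈ compOf S v, lam w) *
        ∏ C ∈ kappa S \ {compOf S u, compOf S v}, (1 + ∏ w ∈ C, lam w)) := by
  have hAB : compOf S u ≠ compOf S v := fun h => hnr (compOf_eq_iff.1 h)
  have h2 : compOf S v ∉ kappa S \ {compOf S u, compOf S v} := by
    simp [Finset.mem_sdiff]
  have h1 : compOf S u ∉ insert (compOf S v) (kappa S \ {compOf S u, compOf S v}) := by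
    simp [Finset.mem_sdiff, hAB]
  conv_lhs => rw [clusterProd, kappa_eq hnr huv, Finset.prod_insert h1, Finset.prod_insert h2]

end Insert

section Numeric
variable {lam : V → ℝ} (hlam : ∀ w : V, 0 < lam w ∧ lam w ≤ 1)
include hlam

lemma prodlam_pos (C : Finset V) : 0 < ∏ w ∈ C, lam w :=
  Finset.prod_pos fun w _ => (hlam w).1

lemma prodlam_le_one (C : Finset V) : ∏ w ∈ C, lam w ≤ 1 :=
  Finset.prod_le_one (fun w _ => (hlam w).1.le) (fun w _ => (hlam w).2)

lemma prodlam_mono {A B : Finset V} (h : A ⊆ B) : ∏ w ∈ B, lam w ≤ ∏ w ∈ A, lam w := by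
  rw [← Finset.prod_sdiff h]
  calc (∏ w ∈ B \ A, lam w) * ∏ w ∈ A, lam w
      ≤ 1 * ∏ w ∈ A, lam w := by
        apply mul_le_mul_of_nonneg_right (prodlam_le_one hlam _) (prodlam_pos hlam _).le
    _ = ∏ w ∈ A, lam w := one_mul _

lemma clusterFactor_pos (T : Finset (Finset V)) : 0 < ∏ C ∈ T, (1 + ∏ w ∈ C, lam w) :=
  Finset.prod_pos fun C _ => by linarith [prodlam_pos hlam C]

lemma clusterProd_pos (S : Finset (Sym2 V)) : 0 < clusterProd S lam :=
  clusterFactor_pos hlam _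

lemma key_ineq {ax bx ay b_y : ℝ} (h1 : 0 < ay) (h2 : ay ≤ ax) (h3 : ax ≤ 1)
    (h4 : 0 < b_y) (h5 : b_y ≤ bx) (h6 : bx ≤ 1) :
    (1 + ax * bx) * ((1 + ay) * (1 + b_y)) ≤ (1 + ay * b_y) * ((1 + ax) * (1 + bx)) := by
  nlinarith [mul_nonneg (sub_nonneg.2 h2) (sub_nonneg.2 (show bx * b_y ≤ 1 by nlinarith)),
    mul_nonneg (sub_nonneg.2 h5) (sub_nonneg.2 (show ax * ay ≤ 1 by nlinarith))]

lemma clusterProd_cross {X Y : Finset (Sym2 V)} (hXY : X ⊆ Y) {u v : V} (huv : u ≠ v) :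
    clusterProd (insert s(u, v) X) lam * clusterProd Y lam ≤
      clusterProd (insert s(u, v) Y) lam * clusterProd X lam := by
  by_cases hY : (SimpleGraph.fromEdgeSet (↑Y : Set (Sym2 V))).Reachable u v
  · rw [clusterProd_insert_of_reachable huv hY lam]
    have h : clusterProd (insert s(u, v) X) lam ≤ clusterProd X lam := by
      by_cases hX : (SimpleGraph.fromEdgeSet (↑X : Set (Sym2 V))).Reachable u v
      · rw [clusterProd_insert_of_reachable huv hX lam]
      · rw [clusterProd_insert hX huv lam, clusterProd_split hX huv lam]
        have ha := prodlam_pos hlam (compOf X u)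
        have hb := prodlam_pos hlam (compOf X v)
        have hP := clusterFactor_pos hlam (kappa X \ {compOf X u, compOf X v})
        nlinarith [mul_pos ha hb, mul_pos (mul_pos ha hb) hP]
    calc clusterProd (insert s(u, v) X) lam * clusterProd Y lam
        ≤ clusterProd X lam * clusterProd Y lam :=
          mul_le_mul_of_nonneg_right h (clusterProd_pos hlam Y).le
      _ = clusterProd Y lam * clusterProd X lam := mul_comm _ _
  · have hX : ¬ (SimpleGraph.fromEdgeSet (↑X : Set (Sym2 V))).Reachable u v := fun h =>
      hY (h.mono (SimpleGraph.fromEdgeSet_mono (by exact_mod_cast hXY)))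
    rw [clusterProd_insert hX huv lam, clusterProd_split hX huv lam,
      clusterProd_insert hY huv lam, clusterProd_split hY huv lam]
    set ax := ∏ w ∈ compOf X u, lam w with hax
    set bx := ∏ w ∈ compOf X v, lam w with hbx
    set ay := ∏ w ∈ compOf Y u, lam w with hay
    set b_y := ∏ w ∈ compOf Y v, lam w with hby
    set PX := ∏ C ∈ kappa X \ {compOf X u, compOf X v}, (1 + ∏ w ∈ C, lam w) with hPX
    set PY := ∏ C ∈ kappa Y \ {compOf Y u, compOf Y v}, (1 + ∏ w ∈ C, lam w) with hPY
    have key : (1 + ax * bx) * ((1 + ay) * (1 + b_y)) ≤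
        (1 + ay * b_y) * ((1 + ax) * (1 + bx)) :=
      key_ineq hlam (prodlam_pos hlam _) (prodlam_mono hlam (compOf_subset hXY u))
        (prodlam_le_one hlam _) (prodlam_pos hlam _)
        (prodlam_mono hlam (compOf_subset hXY v)) (prodlam_le_one hlam _)
    have hPXp : (0:ℝ) < PX := clusterFactor_pos hlam _
    have hPYp : (0:ℝ) < PY := clusterFactor_pos hlam _
    calc (1 + ax * bx) * PX * ((1 + ay) * ((1 + b_y) * PY))
        = ((1 + ax * bx) * ((1 + ay) * (1 + b_y))) * (PX * PY) := by ring
      _ ≤ ((1 + ay * b_y) * ((1 + ax) * (1 + bx))) * (PX * PY) :=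
          mul_le_mul_of_nonneg_right key (mul_nonneg hPXp.le hPYp.le)
      _ = (1 + ay * b_y) * PY * ((1 + ax) * ((1 + bx) * PX)) := by ring

end Numeric

section Wt
variable {E₀ : Finset (Sym2 V)} {q : Sym2 V → ℝ} {lam : V → ℝ}
  (hp : ∀ f ∈ E₀, 0 < q f ∧ q f < 1) (hlam : ∀ w : V, 0 < lam w ∧ lam w ≤ 1)
include hp hlam

lemma wtWRC_pos {S : Finset (Sym2 V)} (hS : S ⊆ E₀) : 0 < wtWRC E₀ q lam S := by
  refine mul_pos (mul_pos ?_ ?_) (clusterProd_pos hlam S)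
  · exact Finset.prod_pos fun f hf => (hp f (hS hf)).1
  · exact Finset.prod_pos fun f hf => by
      have := (hp f (Finset.mem_sdiff.1 hf).1).2; linarith

lemma wtWRC_insert_eq {S : Finset (Sym2 V)} {e : Sym2 V} (he : e ∈ E₀) (heS : e ∉ S) :
    wtWRC E₀ q lam (insert e S) =
      q e * (∏ f ∈ S, q f) * (∏ f ∈ (E₀ \ S).erase e, (1 - q f)) *
        clusterProd (insert e S) lam := by
  rw [wtWRC, Finset.prod_insert heS, Finset.sdiff_insert]

lemma wtWRC_eq {S : Finset (Sym2 V)} {e : Sym2 V} (he : e ∈ E₀) (heS : e ∉ S) :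
    wtWRC E₀ q lam S =
      (∏ f ∈ S, q f) * ((1 - q e) * ∏ f ∈ (E₀ \ S).erase e, (1 - q f)) *
        clusterProd S lam := by
  rw [wtWRC, ← Finset.mul_prod_erase (E₀ \ S) _ (Finset.mem_sdiff.2 ⟨he, heS⟩)]

lemma wtWRC_cross {X Y : Finset (Sym2 V)} (hXY : X ⊆ Y) (hYE : Y ⊆ E₀)
    {u v : V} (huv : u ≠ v) (he : s(u, v) ∈ E₀) (heY : s(u, v) ∉ Y) :
    wtWRC E₀ q lam (insert s(u, v) X) * wtWRC E₀ q lam Y ≤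
      wtWRC E₀ q lam (insert s(u, v) Y) * wtWRC E₀ q lam X := by
  have heX : s(u, v) ∉ X := fun h => heY (hXY h)
  rw [wtWRC_insert_eq hp hlam he heX, wtWRC_insert_eq hp hlam he heY,
    wtWRC_eq hp hlam he heX, wtWRC_eq hp hlam he heY]
  have hqe := hp _ he
  have hPX : (0:ℝ) < ∏ f ∈ X, q f := Finset.prod_pos fun f hf => (hp f (hYE (hXY hf))).1
  have hPY : (0:ℝ) < ∏ f ∈ Y, q f := Finset.prod_pos fun f hf => (hp f (hYE hf)).1
  have hDX : (0:ℝ) < ∏ f ∈ (E₀ \ X).erase s(u, v), (1 - q f) := by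
    refine Finset.prod_pos fun f hf => ?_
    have := (hp f (Finset.mem_sdiff.1 (Finset.mem_of_mem_erase hf)).1).2; linarith
  have hDY : (0:ℝ) < ∏ f ∈ (E₀ \ Y).erase s(u, v), (1 - q f) := by
    refine Finset.prod_pos fun f hf => ?_
    have := (hp f (Finset.mem_sdiff.1 (Finset.mem_of_mem_erase hf)).1).2; linarith
  have hcross := clusterProd_cross hlam hXY huv
  set cX := clusterProd (insert s(u, v) X) lam
  set cY := clusterProd (insert s(u, v) Y) lam
  set K := q s(u, v) * (1 - q s(u, v)) * ((∏ f ∈ X, q f) * (∏ f ∈ Y, q f) *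
    ((∏ f ∈ (E₀ \ X).erase s(u, v), (1 - q f)) * ∏ f ∈ (E₀ \ Y).erase s(u, v), (1 - q f)))
    with hK
  have hKpos : 0 ≤ K := by
    rw [hK]
    have h0 : (0:ℝ) < q s(u, v) := hqe.1
    have h1 : (0:ℝ) < 1 - q s(u, v) := by linarith [hqe.2]
    positivity
  calc q s(u, v) * (∏ f ∈ X, q f) * (∏ f ∈ (E₀ \ X).erase s(u, v), (1 - q f)) * cX *
        ((∏ f ∈ Y, q f) *
          ((1 - q s(u, v)) * ∏ f ∈ (E₀ \ Y).erase s(u, v), (1 - q f)) * clusterProd Y lam)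
      = K * (cX * clusterProd Y lam) := by rw [hK]; ring
    _ ≤ K * (cY * clusterProd X lam) := mul_le_mul_of_nonneg_left hcross hKpos
    _ = q s(u, v) * (∏ f ∈ Y, q f) * (∏ f ∈ (E₀ \ Y).erase s(u, v), (1 - q f)) * cY *
        ((∏ f ∈ X, q f) *
          ((1 - q s(u, v)) * ∏ f ∈ (E₀ \ X).erase s(u, v), (1 - q f)) * clusterProd X lam) := by
        rw [hK]; ring

end Wt
end Aux

/-- Monotonicity of the Metropolis acceptance probabilities of the edge-flipping dynamics for
the weighted random cluster model: for `X ⊆ Y` and any edge `e ∈ E`, the acceptance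
probability of adding `e` is larger from `Y`, and the acceptance probability of removing `e`
is larger from `X`. -/
theorem wrc_grand_coupling_monotone {V : Type*} [Fintype V] [DecidableEq V]
    (G : SimpleGraph V) [DecidableRel G.Adj]
    (p : Sym2 V → ℝ) (lam : V → ℝ)
    (hp : ∀ e ∈ G.edgeFinset, 0 < p e ∧ p e < 1)
    (hlam : ∀ v : V, 0 < lam v ∧ lam v ≤ 1) :
    ∀ X Y : Finset (Sym2 V), X ⊆ Y → Y ⊆ G.edgeFinset → ∀ e ∈ G.edgeFinset,
      min 1 (wtWRC G.edgeFinset p lam (X ∪ {e}) / wtWRC G.edgeFinset p lam X) ≤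
        min 1 (wtWRC G.edgeFinset p lam (Y ∪ {e}) / wtWRC G.edgeFinset p lam Y) ∧
      min 1 (wtWRC G.edgeFinset p lam (Y \ {e}) / wtWRC G.edgeFinset p lam Y) ≤
        min 1 (wtWRC G.edgeFinset p lam (X \ {e}) / wtWRC G.edgeFinset p lam X) := by
  intro X Y hXY hYE e heE
  induction e using Sym2.ind with
  | _ u v =>
  have hXE : X ⊆ G.edgeFinset := hXY.trans hYE
  have hadj : G.Adj u v := by rwa [SimpleGraph.mem_edgeFinset, SimpleGraph.mem_edgeSet] at heE
  have huv : u ≠ v := hadj.ne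
  have hwX : 0 < wtWRC G.edgeFinset p lam X := wtWRC_pos hp hlam hXE
  have hwY : 0 < wtWRC G.edgeFinset p lam Y := wtWRC_pos hp hlam hYE
  constructor
  · by_cases heY : s(u, v) ∈ Y
    · rw [Finset.union_comm Y, ← Finset.insert_eq, Finset.insert_eq_self.2 heY,
        div_self hwY.ne']
      exact le_trans (min_le_left _ _) (le_of_eq (min_self 1).symm)
    · have heX : s(u, v) ∉ X := fun h => heY (hXY h)
      rw [Finset.union_comm X, ← Finset.insert_eq, Finset.union_comm Y, ← Finset.insert_eq]
      refine min_le_min le_rfl ?_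
      rw [div_le_div_iff₀ hwX hwY]
      exact wtWRC_cross hp hlam hXY hYE huv heE heY
  · by_cases heY : s(u, v) ∈ Y
    · by_cases heX : s(u, v) ∈ X
      · rw [Finset.sdiff_singleton_eq_erase, Finset.sdiff_singleton_eq_erase]
        refine min_le_min le_rfl ?_
        rw [div_le_div_iff₀ hwY hwX]
        have h1 : X.erase s(u, v) ⊆ Y.erase s(u, v) := Finset.erase_subset_erase _ hXY
        have h2 : Y.erase s(u, v) ⊆ G.edgeFinset := (Finset.erase_subset _ _).trans hYE
        have h3 := wtWRC_cross hp hlam h1 h2 huv heE (Finset.notMem_erase _ _)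
        rw [Finset.insert_erase heX, Finset.insert_erase heY] at h3
        linarith
      · rw [Finset.sdiff_singleton_eq_erase, Finset.sdiff_singleton_eq_erase,
          Finset.erase_eq_of_notMem heX, div_self hwX.ne']
        exact le_trans (min_le_left _ _) (le_of_eq (min_self 1).symm)
    · have heX : s(u, v) ∉ X := fun h => heY (hXY h)
      rw [Finset.sdiff_singleton_eq_erase, Finset.sdiff_singleton_eq_erase,
        Finset.erase_eq_of_notMem heX, Finset.erase_eq_of_notMem heY,
        div_self hwX.ne', div_self hwY.ne']

end
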